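/- Let w : ℝ → ℝ satisfy w'' = ξ w + 2w³ and α ≠ 0. For t < 0 and (y,x) ∈ ℝ², set ξ = x·(−3t)^{−1/3} + y²·(−3t)^{−4/3}, p = α·(−3t)^{−1/3}·exp(−xy/(3t) + 2y³/(27t²))·w(ξ), r = −α^{−1}·(−3t)^{−1/3}·exp(xy/(3t) − 2y³/(27t²))·w(ξ). Then, with ∂_x denoting the x-derivative, p and r satisfy the scalar Tracy–Widom-type ODE system: 3t·∂_x²p + 2y·∂_x p + 6t·p²r + x·p = 0 and 3t·∂_x²r − 2y·∂_x r + 6t·r²p + x·r = 0. -/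

import Mathlib

lemma aux_hd (g : ℝ → ℝ) (hg : Differentiable ℝ g) (A a b c d x : ℝ) :
    HasDerivAt (fun x => A * Real.exp (a*x+b) * g (c*x+d))
      (A * a * Real.exp (a*x+b) * g (c*x+d) + A * c * Real.exp (a*x+b) * deriv g (c*x+d)) x := by
  have h1 : HasDerivAt (fun x : ℝ => a*x+b) a x := by
    simpa using ((hasDerivAt_id x).const_mul a).add_const b
  have h2 : HasDerivAt (fun x : ℝ => Real.exp (a*x+b)) (Real.exp (a*x+b) * a) x :=
    (Real.hasDerivAt_exp _).comp x h1
  have h3 : HasDerivAt (fun x : ℝ => c*x+d) c x := by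
    simpa using ((hasDerivAt_id x).const_mul c).add_const d
  have h4 : HasDerivAt (fun x : ℝ => g (c*x+d)) (deriv g (c*x+d) * c) x :=
    ((hg (c*x+d)).hasDerivAt).comp x h3
  have h5 := (h2.const_mul A).mul h4
  exact h5.congr_deriv (by ring)

lemma aux_d1 (g : ℝ → ℝ) (hg : Differentiable ℝ g) (A a b c d x : ℝ) :
    deriv (fun x => A * Real.exp (a*x+b) * g (c*x+d)) x
      = A * a * Real.exp (a*x+b) * g (c*x+d) + A * c * Real.exp (a*x+b) * deriv g (c*x+d) :=
  (aux_hd g hg A a b c d x).deriv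

lemma aux_d2 (g : ℝ → ℝ) (hg : Differentiable ℝ g) (hg' : Differentiable ℝ (deriv g))
    (A a b c d x : ℝ) :
    deriv (deriv (fun x => A * Real.exp (a*x+b) * g (c*x+d))) x
      = A * a^2 * Real.exp (a*x+b) * g (c*x+d)
        + 2 * A * a * c * Real.exp (a*x+b) * deriv g (c*x+d)
        + A * c^2 * Real.exp (a*x+b) * deriv (deriv g) (c*x+d) := by
  have hfe : deriv (fun x => A * Real.exp (a*x+b) * g (c*x+d))
      = fun x => (A*a) * Real.exp (a*x+b) * g (c*x+d)
          + (A*c) * Real.exp (a*x+b) * deriv g (c*x+d) := by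
    funext x'
    rw [aux_d1 g hg A a b c d x']
  rw [hfe]
  have h := ((aux_hd g hg (A*a) a b c d x).add (aux_hd (deriv g) hg' (A*c) a b c d x)).deriv
  exact h.trans (by ring)

lemma aux_alg (t y x A B c E W W' W'' : ℝ) (ht : t ≠ 0) (hE : E ≠ 0)
    (hc3 : 3*t*c^3 = -1) (hAB : A * B = -c^2)
    (hW'' : W'' = (c*x + y^2*c^4)*W + 2*W^3) :
    3*t*(A*(-y/(3*t))^2*E*W + 2*A*(-y/(3*t))*c*E*W' + A*c^2*E*W'')
      + 2*y*(A*(-y/(3*t))*E*W + A*c*E*W')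
      + 6*t*(A*E*W)^2*(B*E⁻¹*W) + x*(A*E*W) = 0 := by
  subst hW''
  have h6 : 6*t*(A*E*W)^2*(B*E⁻¹*W) = -(6*t*A*c^2*E*W^3) := by
    field_simp
    linear_combination (A*W^3) * hAB
  rw [h6]
  field_simp
  linear_combination (A*E*W*(3*t*x + y^2*(3*t*c^3-1))) * hc3

/-- Self-similar Painlevé II solutions of the scalar Tracy–Widom-type ODE system. -/
theorem stmt_5 (w : ℝ → ℝ)
    (hw1 : Differentiable ℝ w) (hw2 : Differentiable ℝ (deriv w))
    (hPII : ∀ s : ℝ, deriv (deriv w) s = s * w s + 2 * (w s) ^ 3)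
    (α : ℝ) (hα : α ≠ 0)
    (ξ : ℝ → ℝ → ℝ → ℝ)
    (hξ : ∀ x y t : ℝ,
      ξ x y t = x * (-3 * t) ^ (-(1 / 3 : ℝ)) + y ^ 2 * (-3 * t) ^ (-(4 / 3 : ℝ)))
    (p r : ℝ → ℝ → ℝ → ℝ)
    (hp : ∀ t : ℝ, t < 0 → ∀ y x : ℝ, p t y x
        = α * (-3 * t) ^ (-(1 / 3 : ℝ)) * Real.exp (-(x * y) / (3 * t) + 2 * y ^ 3 / (27 * t ^ 2))
            * w (ξ x y t))
    (hr : ∀ t : ℝ, t < 0 → ∀ y x : ℝ, r t y x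
        = -α⁻¹ * (-3 * t) ^ (-(1 / 3 : ℝ)) * Real.exp ((x * y) / (3 * t) - 2 * y ^ 3 / (27 * t ^ 2))
            * w (ξ x y t)) :
    ∀ t : ℝ, t < 0 → ∀ y x : ℝ,
      3 * t * deriv (deriv (fun x' => p t y x')) x + 2 * y * deriv (fun x' => p t y x') x
          + 6 * t * (p t y x) ^ 2 * r t y x + x * p t y x = 0
      ∧ 3 * t * deriv (deriv (fun x' => r t y x')) x - 2 * y * deriv (fun x' => r t y x') x
          + 6 * t * (r t y x) ^ 2 * p t y x + x * r t y x = 0 := by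
  intro t ht y x
  have ht0 : t ≠ 0 := ne_of_lt ht
  have h3t : (0:ℝ) < -3 * t := by linarith
  set c : ℝ := (-3 * t) ^ (-(1 / 3 : ℝ)) with hc
  have hc3 : 3 * t * c ^ 3 = -1 := by
    have h1 : c ^ 3 = (-3*t)⁻¹ := by
      rw [hc, ← Real.rpow_natCast ((-3*t) ^ (-(1/3:ℝ))) 3, ← Real.rpow_mul h3t.le,
        show (-(1/3:ℝ)) * ((3:ℕ):ℝ) = -1 by norm_num, Real.rpow_neg_one]
    rw [h1]
    field_simp
  have hc4 : (-3 * t) ^ (-(4 / 3 : ℝ)) = c ^ 4 := by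
    rw [hc, ← Real.rpow_natCast ((-3*t) ^ (-(1/3:ℝ))) 4, ← Real.rpow_mul h3t.le]
    norm_num
  set a : ℝ := -y / (3 * t) with ha
  set b : ℝ := 2 * y ^ 3 / (27 * t ^ 2) with hb
  set d : ℝ := y ^ 2 * c ^ 4 with hd
  have hξ' : ∀ x' : ℝ, ξ x' y t = c * x' + d := by
    intro x'
    rw [hξ, hc4]; ring
  have hpfun : (fun x' => p t y x') = fun x' => (α * c) * Real.exp (a * x' + b) * w (c * x' + d) := by
    funext x'
    rw [hp t ht y x', hξ' x']
    have : -(x' * y) / (3 * t) + 2 * y ^ 3 / (27 * t ^ 2) = a * x' + b := by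
      rw [ha, hb]; ring
    rw [this]
  have hrfun : (fun x' => r t y x')
      = fun x' => (-α⁻¹ * c) * Real.exp (-a * x' + -b) * w (c * x' + d) := by
    funext x'
    rw [hr t ht y x', hξ' x']
    have : (x' * y) / (3 * t) - 2 * y ^ 3 / (27 * t ^ 2) = -a * x' + -b := by
      rw [ha, hb]; ring
    rw [this]
  have hEp : Real.exp (a * x + b) ≠ 0 := Real.exp_ne_zero _
  have hEr : Real.exp (-a * x + -b) ≠ 0 := Real.exp_ne_zero _
  have hexp : Real.exp (a * x + b) = (Real.exp (-a * x + -b))⁻¹ := by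
    rw [← Real.exp_neg]; congr 1; ring
  have hW2 : deriv (deriv w) (c * x + d) = (c * x + y^2 * c^4) * w (c * x + d)
      + 2 * (w (c * x + d)) ^ 3 := by
    rw [hPII (c * x + d), hd]
  -- values at x
  have hpx : p t y x = (α * c) * Real.exp (a * x + b) * w (c * x + d) := congrFun hpfun x
  have hrx : r t y x = (-α⁻¹ * c) * Real.exp (-a * x + -b) * w (c * x + d) := congrFun hrfun x
  have hexp2 : Real.exp (-a * x + -b) = (Real.exp (a * x + b))⁻¹ := by
    rw [← Real.exp_neg]; congr 1; ring
  constructor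
  · rw [hpfun,
      aux_d1 w hw1 (α * c) a b c d x,
      aux_d2 w hw1 hw2 (α * c) a b c d x, hW2, hpx, hrx, hexp2]
    have halg := aux_alg t y x (α * c) (-α⁻¹ * c) c (Real.exp (a * x + b))
      (w (c * x + d)) (deriv w (c * x + d))
      ((c * x + y^2 * c^4) * w (c * x + d) + 2 * (w (c * x + d)) ^ 3)
      ht0 hEp hc3 (by field_simp) rfl
    linear_combination halg
  · rw [hrfun,
      aux_d1 w hw1 (-α⁻¹ * c) (-a) (-b) c d x,
      aux_d2 w hw1 hw2 (-α⁻¹ * c) (-a) (-b) c d x, hW2, hrx, hpx, hexp]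
    have halg := aux_alg t (-y) x (-α⁻¹ * c) (α * c) c (Real.exp (-a * x + -b))
      (w (c * x + d)) (deriv w (c * x + d))
      ((c * x + y^2 * c^4) * w (c * x + d) + 2 * (w (c * x + d)) ^ 3)
      ht0 hEr hc3 (by field_simp) (by ring_nf)
    linear_combination halg
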